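/- For the function c(τ,x) = ∫₀² (4π(τ+2s))^{-3/2} exp(-x²/(4(τ+2s))) ds on ℝ₊ × ℝ³, there exist constants C, c > 0 such that c(τ,x) ≤ C(e^{-c|x|²}(|x|² + τ)^{-1/2} 1_{τ∈[0,2]} + τ^{-3/2} e^{-c|x|²/τ} 1_{τ>2}). -/

import Mathlib

open MeasureTheory Real Set

noncomputable section

lemma aux1 (y : ℝ) (hy : 0 ≤ y) : (1+y) ^ ((3:ℝ)/2) ≤ 256 * Real.exp (y/8) := by
  have h1 : (1+y) ^ ((3:ℝ)/2) ≤ (1+y) ^ (2:ℝ) :=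
    Real.rpow_le_rpow_of_exponent_le (by linarith) (by norm_num)
  have h2 : (1+y) ^ (2:ℝ) = (1+y)^2 := by
    rw [show (2:ℝ) = ((2:ℕ):ℝ) by norm_num, Real.rpow_natCast]
  have h3 : y/16 + 1 ≤ Real.exp (y/16) := Real.add_one_le_exp _
  have h4 : Real.exp (y/16) * Real.exp (y/16) = Real.exp (y/8) := by
    rw [← Real.exp_add]; ring_nf
  have h5 : (y/16+1)*(y/16+1) ≤ Real.exp (y/16) * Real.exp (y/16) :=
    mul_le_mul h3 h3 (by positivity) (Real.exp_pos _).le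
  rw [h2] at h1
  nlinarith [h5, h4, h1, hy]

lemma ptbound (q u : ℝ) (hq : 0 ≤ q) (hu : 0 < u) (hu6 : u ≤ 6) :
    u ^ (-(3:ℝ)/2) * Real.exp (-q/(4*u)) ≤
      256 * Real.exp (-q/48) * (q+u) ^ (-(3:ℝ)/2) := by
  have hqu : 0 < q + u := by linarith
  have h1 : (q+u) ^ ((3:ℝ)/2) ≤ 256 * Real.exp (q/(8*u)) * u ^ ((3:ℝ)/2) := by
    have hy : (0:ℝ) ≤ q/u := div_nonneg hq hu.le
    have ha1 := aux1 (q/u) hy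
    have heq : (q+u) ^ ((3:ℝ)/2) = u ^ ((3:ℝ)/2) * (1 + q/u) ^ ((3:ℝ)/2) := by
      rw [← Real.mul_rpow hu.le (by positivity)]
      congr 1
      field_simp
      ring
    have hupos : (0:ℝ) ≤ u ^ ((3:ℝ)/2) := Real.rpow_nonneg hu.le _
    have harg : q/u/8 = q/(8*u) := by ring
    calc (q+u) ^ ((3:ℝ)/2) = u ^ ((3:ℝ)/2) * (1 + q/u) ^ ((3:ℝ)/2) := heq
      _ ≤ u ^ ((3:ℝ)/2) * (256 * Real.exp (q/u/8)) :=
          mul_le_mul_of_nonneg_left ha1 hupos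
      _ = 256 * Real.exp (q/(8*u)) * u ^ ((3:ℝ)/2) := by rw [harg]; ring
  have hexp : Real.exp (-q/(4*u)) = Real.exp (-q/(8*u)) * Real.exp (-q/(8*u)) := by
    rw [← Real.exp_add]; congr 1; field_simp; ring
  have hexp2 : Real.exp (-q/(8*u)) ≤ Real.exp (-q/48) := by
    apply Real.exp_le_exp.2
    rw [neg_div, neg_div, neg_le_neg_iff]
    rw [div_le_div_iff₀ (by norm_num) (by linarith)]
    nlinarith
  have hU : (0:ℝ) < u ^ ((3:ℝ)/2) := Real.rpow_pos_of_pos hu _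
  have hQU : (0:ℝ) < (q+u) ^ ((3:ℝ)/2) := Real.rpow_pos_of_pos hqu _
  rw [show (-(3:ℝ)/2) = -((3:ℝ)/2) by norm_num, Real.rpow_neg hu.le,
    Real.rpow_neg hqu.le, hexp, inv_mul_eq_div, ← div_eq_mul_inv,
    div_le_div_iff₀ hU hQU]
  have hee : Real.exp (-q/(8*u)) * Real.exp (q/(8*u)) = 1 := by
    rw [← Real.exp_add]; simp [neg_div]
  set E1 := Real.exp (-q/(8*u)) with hE1
  set Ep := Real.exp (q/(8*u)) with hEp
  set E48 := Real.exp (-q/48) with hE48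
  have hE1pos : 0 < E1 := Real.exp_pos _
  calc E1 * E1 * (q+u) ^ ((3:ℝ)/2)
      ≤ E1 * E1 * (256 * Ep * u ^ ((3:ℝ)/2)) :=
        mul_le_mul_of_nonneg_left h1 (by positivity)
    _ = 256 * E1 * u ^ ((3:ℝ)/2) := by
        rw [show E1 * E1 * (256 * Ep * u ^ ((3:ℝ)/2))
          = 256 * (E1 * Ep) * E1 * u ^ ((3:ℝ)/2) by ring, hee]
        ring
    _ ≤ 256 * E48 * u ^ ((3:ℝ)/2) := by
        have := mul_le_mul_of_nonneg_right
          (mul_le_mul_of_nonneg_left hexp2 (by norm_num : (0:ℝ) ≤ 256)) hU.le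
        linarith

lemma ftc_rpow (a : ℝ) (ha : 0 < a) :
    ∫ s in Set.Ioc (0:ℝ) 2, (a + 2*s) ^ (-(3:ℝ)/2)
      = a ^ (-(1:ℝ)/2) - (a+4) ^ (-(1:ℝ)/2) := by
  have key : ∀ s ∈ Set.uIcc (0:ℝ) 2,
      HasDerivAt (fun t => -((a + 2*t) ^ (-(1:ℝ)/2))) ((a + 2*s) ^ (-(3:ℝ)/2)) s := by
    intro s hs
    rw [Set.uIcc_of_le (by norm_num)] at hs
    have hpos : 0 < a + 2*s := by
      have := hs.1; linarith
    have hin : HasDerivAt (fun t => a + 2*t) 2 s := by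
      simpa using (hasDerivAt_id s).const_mul 2 |>.const_add a
    have hr := (Real.hasDerivAt_rpow_const (x := a + 2*s) (p := -(1:ℝ)/2)
      (Or.inl hpos.ne')).comp s hin
    have := hr.neg
    refine this.congr_deriv ?_
    rw [show (-(1:ℝ)/2 - 1) = -(3:ℝ)/2 by norm_num]
    ring
  have hcont : ContinuousOn (fun s => (a + 2*s) ^ (-(3:ℝ)/2)) (Set.uIcc (0:ℝ) 2) := by
    apply ContinuousOn.rpow_const
    · fun_prop
    · intro x hx
      rw [Set.uIcc_of_le (by norm_num)] at hx
      exact Or.inl (by have := hx.1; positivity)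
  have := intervalIntegral.integral_eq_sub_of_hasDerivAt key
    (hcont.intervalIntegrable)
  rw [intervalIntegral.integral_of_le (by norm_num : (0:ℝ) ≤ 2)] at this
  rw [this]
  norm_num
  ring


abbrev E3 := EuclideanSpace ℝ (Fin 3)

/-- `c(τ,x) = ∫₀² (4π(τ+2s))^{-3/2} exp(-|x|²/(4(τ+2s))) ds`. -/
def cker (τ : ℝ) (x : E3) : ℝ :=
  ∫ s in Set.Ioc (0:ℝ) 2,
    (4 * Real.pi * (τ + 2*s)) ^ (-(3:ℝ)/2) * Real.exp (-‖x‖^2 / (4 * (τ + 2*s)))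

/-- Pointwise bound on the time-integrated heat kernel:
`c(τ,x) ≤ C (e^{-c|x|²}(|x|²+τ)^{-1/2} 1_{τ∈[0,2]} + τ^{-3/2} e^{-c|x|²/τ} 1_{τ>2})`. -/
theorem cker_bound : ∃ C > (0:ℝ), ∃ c > (0:ℝ), ∀ τ : ℝ, 0 ≤ τ → ∀ x : E3,
    cker τ x ≤ C * ((if τ ≤ 2 then Real.exp (-c * ‖x‖^2) * (‖x‖^2 + τ) ^ (-(1:ℝ)/2) else 0)
      + (if 2 < τ then τ ^ (-(3:ℝ)/2) * Real.exp (-c * ‖x‖^2 / τ) else 0)) := by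
  refine ⟨512, by norm_num, 1/48, by norm_num, ?_⟩
  intro τ hτ x
  have hq0 : (0:ℝ) ≤ ‖x‖^2 := by positivity
  set q : ℝ := ‖x‖^2 with hqdef
  unfold cker
  by_cases hτ2 : τ ≤ 2
  · rw [if_pos hτ2, if_neg (by linarith)]
    by_cases ha : q + τ = 0
    · -- degenerate case: τ = 0 and ‖x‖ = 0, integrand not integrable, integral = 0
      have hqz : q = 0 := by linarith [hq0, hτ]
      have hτz : τ = 0 := by linarith [hq0, hτ]
      rw [ha, Real.zero_rpow (by norm_num : (-(1:ℝ)/2) ≠ 0)]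
      have hnint : ¬ IntegrableOn
          (fun s => (4 * Real.pi * (τ + 2*s)) ^ (-(3:ℝ)/2)
            * Real.exp (-q / (4 * (τ + 2*s)))) (Set.Ioc (0:ℝ) 2) := by
        intro hI
        have hI' : IntegrableOn
            (fun s => (4 * Real.pi * (τ + 2*s)) ^ (-(3:ℝ)/2)
              * Real.exp (-q / (4 * (τ + 2*s)))) (Set.Ioo (0:ℝ) 2) :=
          hI.mono_set Set.Ioo_subset_Ioc_self
        have hI2 := hI'.const_mul ((8 * Real.pi) ^ ((3:ℝ)/2))
        have h3 : IntegrableOn (fun s : ℝ => s ^ (-(3:ℝ)/2)) (Set.Ioo (0:ℝ) 2) := by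
          refine IntegrableOn.congr_fun hI2 ?_ measurableSet_Ioo
          intro s hs
          have hs0 : 0 < s := hs.1
          have h8 : (0:ℝ) < 8 * Real.pi := by positivity
          simp only [hqz, hτz, neg_zero, zero_div, Real.exp_zero, mul_one, zero_add]
          have : 4 * Real.pi * (2*s) = (8 * Real.pi) * s := by ring
          rw [this, Real.mul_rpow h8.le hs0.le, ← mul_assoc,
            show (-(3:ℝ)/2) = -((3:ℝ)/2) by norm_num,
            Real.rpow_neg h8.le, mul_inv_cancel₀ (by positivity), one_mul]
        rw [intervalIntegral.integrableOn_Ioo_rpow_iff (by norm_num : (0:ℝ) < 2)] at h3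
        norm_num at h3
      rw [integral_undef hnint]
      positivity
    · have hA : 0 < q + τ := lt_of_le_of_ne (by positivity) (Ne.symm ha)
      have hmono : ∀ s ∈ Set.Ioc (0:ℝ) 2,
          (4 * Real.pi * (τ + 2*s)) ^ (-(3:ℝ)/2) * Real.exp (-q / (4 * (τ + 2*s)))
            ≤ 256 * Real.exp (-q/48) * ((q + τ) + 2*s) ^ (-(3:ℝ)/2) := by
        intro s hs
        have hu : 0 < τ + 2*s := by linarith [hs.1]
        have hu6 : τ + 2*s ≤ 6 := by linarith [hs.2]
        have step1 : (4 * Real.pi * (τ + 2*s)) ^ (-(3:ℝ)/2) ≤ (τ + 2*s) ^ (-(3:ℝ)/2) := by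
          apply Real.rpow_le_rpow_of_nonpos hu ?_ (by norm_num)
          nlinarith [Real.pi_gt_three]
        have step2 := ptbound q (τ + 2*s) hq0 hu hu6
        have : q + (τ + 2*s) = (q + τ) + 2*s := by ring
        rw [this] at step2
        calc (4 * Real.pi * (τ + 2*s)) ^ (-(3:ℝ)/2) * Real.exp (-q / (4 * (τ + 2*s)))
            ≤ (τ + 2*s) ^ (-(3:ℝ)/2) * Real.exp (-q / (4 * (τ + 2*s))) :=
              mul_le_mul_of_nonneg_right step1 (Real.exp_pos _).le
          _ ≤ 256 * Real.exp (-q/48) * ((q + τ) + 2*s) ^ (-(3:ℝ)/2) := step2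
      have hgint : IntegrableOn
          (fun s => 256 * Real.exp (-q/48) * ((q + τ) + 2*s) ^ (-(3:ℝ)/2))
          (Set.Ioc (0:ℝ) 2) := by
        refine (ContinuousOn.integrableOn_Icc ?_).mono_set Set.Ioc_subset_Icc_self
        refine ContinuousOn.mul continuousOn_const ?_
        refine ContinuousOn.rpow_const (by fun_prop) ?_
        intro s hs
        exact Or.inl (ne_of_gt (by linarith [hs.1]))
      have hle : cker τ x ≤ ∫ s in Set.Ioc (0:ℝ) 2,
          256 * Real.exp (-q/48) * ((q + τ) + 2*s) ^ (-(3:ℝ)/2) := by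
        unfold cker
        refine integral_mono_of_nonneg ?_ hgint ?_
        · refine (ae_restrict_iff' measurableSet_Ioc).2 (Filter.Eventually.of_forall ?_)
          intro s hs
          have hu : 0 < 4 * Real.pi * (τ + 2*s) := by nlinarith [Real.pi_gt_three, hs.1]
          exact mul_nonneg (Real.rpow_nonneg hu.le _) (Real.exp_pos _).le
        · exact (ae_restrict_iff' measurableSet_Ioc).2 (Filter.Eventually.of_forall hmono)
      have hval : ∫ s in Set.Ioc (0:ℝ) 2,
          256 * Real.exp (-q/48) * ((q + τ) + 2*s) ^ (-(3:ℝ)/2)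
          = 256 * Real.exp (-q/48) * ((q+τ) ^ (-(1:ℝ)/2) - ((q+τ)+4) ^ (-(1:ℝ)/2)) := by
        rw [integral_const_mul, ftc_rpow (q+τ) hA]
      unfold cker at hle
      rw [hval] at hle
      refine hle.trans ?_
      have hB : (0:ℝ) ≤ ((q+τ)+4) ^ (-(1:ℝ)/2) := Real.rpow_nonneg (by positivity) _
      have hA2 : (0:ℝ) ≤ (q+τ) ^ (-(1:ℝ)/2) := Real.rpow_nonneg hA.le _
      have hE : Real.exp (-(1/48:ℝ) * q) = Real.exp (-q/48) := by ring_nf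
      rw [add_zero, hE]
      nlinarith [Real.exp_pos (-q/48), mul_nonneg (Real.exp_pos (-q/48)).le hB,
        mul_nonneg (Real.exp_pos (-q/48)).le hA2]
  · push_neg at hτ2
    rw [if_neg (by linarith), if_pos hτ2]
    have hτ0 : 0 < τ := by linarith
    set K : ℝ := τ ^ (-(3:ℝ)/2) * Real.exp (-(1/48:ℝ) * q / τ) with hK
    have hKnn : 0 ≤ K := by positivity
    have hmono : ∀ s ∈ Set.Ioc (0:ℝ) 2,
        (4 * Real.pi * (τ + 2*s)) ^ (-(3:ℝ)/2) * Real.exp (-q / (4 * (τ + 2*s))) ≤ K := by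
      intro s hs
      have hu : 0 < τ + 2*s := by linarith [hs.1]
      have step1 : (4 * Real.pi * (τ + 2*s)) ^ (-(3:ℝ)/2) ≤ τ ^ (-(3:ℝ)/2) := by
        apply Real.rpow_le_rpow_of_nonpos hτ0 ?_ (by norm_num)
        nlinarith [Real.pi_gt_three, hs.1]
      have step2 : Real.exp (-q / (4 * (τ + 2*s))) ≤ Real.exp (-(1/48:ℝ) * q / τ) := by
        apply Real.exp_le_exp.2
        rw [show -(1/48:ℝ) * q / τ = -(q / (48 * τ)) by ring, neg_div, neg_le_neg_iff]
        apply div_le_div_of_nonneg_left hq0 (by positivity)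
        nlinarith [hs.1, hs.2]
      calc (4 * Real.pi * (τ + 2*s)) ^ (-(3:ℝ)/2) * Real.exp (-q / (4 * (τ + 2*s)))
          ≤ τ ^ (-(3:ℝ)/2) * Real.exp (-q / (4 * (τ + 2*s))) :=
            mul_le_mul_of_nonneg_right step1 (Real.exp_pos _).le
        _ ≤ K := mul_le_mul_of_nonneg_left step2 (by positivity)
    have hle : cker τ x ≤ ∫ _ in Set.Ioc (0:ℝ) 2, K := by
      unfold cker
      refine integral_mono_of_nonneg ?_ ?_ ?_
      · refine (ae_restrict_iff' measurableSet_Ioc).2 (Filter.Eventually.of_forall ?_)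
        intro s hs
        have hu : 0 < 4 * Real.pi * (τ + 2*s) := by nlinarith [Real.pi_gt_three, hs.1]
        exact mul_nonneg (Real.rpow_nonneg hu.le _) (Real.exp_pos _).le
      · exact integrableOn_const (by simp)
      · exact (ae_restrict_iff' measurableSet_Ioc).2 (Filter.Eventually.of_forall hmono)
    unfold cker at hle
    refine hle.trans ?_
    rw [setIntegral_const, Real.volume_real_Ioc_of_le (by norm_num), smul_eq_mul]
    rw [show (2:ℝ) - 0 = 2 by norm_num]
    linarith [hKnn]


end
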